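/- For a complex unital Banach algebra A and any element a in A, the algebra numerical range V(a) equals the intersection over all complex z of the closed disks centered at z with radius ||a - z·1||. -/

import Mathlib

/-- Algebra numerical range of an element of a complex unital Banach algebra,
defined via states: `V(a) = {z | ∃ f : A →L[ℂ] ℂ, ‖f‖ = 1 ∧ f 1 = 1 ∧ f a = z}`. -/
def numRange (A : Type*) [NormedRing A] [NormedAlgebra ℂ A] (a : A) : Set ℂ :=
  {z | ∃ f : A →L[ℂ] ℂ, ‖f‖ = 1 ∧ f 1 = 1 ∧ f a = z}

theorem stmt0 (A : Type*) [NormedRing A] [NormedAlgebra ℂ A] [CompleteSpace A]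
    [NormOneClass A] (a : A) :
    numRange A a =
      ⋂ z : ℂ, Metric.closedBall z ‖a - algebraMap ℂ A z‖ := by
  ext w
  simp only [Set.mem_iInter, Metric.mem_closedBall, dist_eq_norm, numRange, Set.mem_setOf_eq]
  constructor
  · rintro ⟨f, hf, hf1, rfl⟩ z
    have h1 : f a - z = f (a - algebraMap ℂ A z) := by
      simp [map_sub, Algebra.algebraMap_eq_smul_one, hf1]
    rw [h1]
    calc ‖f (a - algebraMap ℂ A z)‖ ≤ ‖f‖ * ‖a - algebraMap ℂ A z‖ := f.le_opNorm _
    _ = ‖a - algebraMap ℂ A z‖ := by rw [hf, one_mul]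
  · intro hw
    have key : ∀ p : ℂ × ℂ, ‖p.1 + p.2 * w‖ ≤ ‖p.1 • (1:A) + p.2 • a‖ := by
      rintro ⟨α, β⟩
      dsimp only
      rcases eq_or_ne β 0 with rfl | hβ
      · simp [norm_smul]
      · have h := hw (-α / β)
        have hβα : β * (-α / β) = -α := by field_simp
        have h2 : α + β * w = β * (w - (-α / β)) := by rw [mul_sub, hβα]; ring
        rw [h2, norm_mul]
        calc ‖β‖ * ‖w - (-α / β)‖ ≤ ‖β‖ * ‖a - algebraMap ℂ A (-α / β)‖ := by gcongr
        _ = ‖β • (a - algebraMap ℂ A (-α / β))‖ := (norm_smul _ _).symm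
        _ = ‖α • (1:A) + β • a‖ := by
            rw [Algebra.algebraMap_eq_smul_one, smul_sub, smul_smul]
            have : β * (-α / β) = -α := by field_simp
            rw [this, neg_smul, sub_neg_eq_add, add_comm]
    let T : (ℂ × ℂ) →ₗ[ℂ] A :=
      { toFun := fun p => p.1 • (1:A) + p.2 • a
        map_add' := by intro p q; simp [add_smul]; abel
        map_smul' := by intro c p; simp [smul_smul, smul_add] }
    let φ : (ℂ × ℂ) →ₗ[ℂ] ℂ :=
      { toFun := fun p => p.1 + p.2 * w
        map_add' := by intro p q; dsimp; ring
        map_smul' := by intro c p; dsimp; ring }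
    have hker : LinearMap.ker T ≤ LinearMap.ker φ := by
      intro p hp
      rw [LinearMap.mem_ker] at hp ⊢
      have := key p
      rw [show p.1 • (1:A) + p.2 • a = T p from rfl, hp, norm_zero] at this
      have := le_antisymm this (norm_nonneg _)
      simpa [φ] using norm_eq_zero.mp this
    let ψ : ((ℂ × ℂ) ⧸ LinearMap.ker T) →ₗ[ℂ] ℂ := (LinearMap.ker T).liftQ φ hker
    let e := T.quotKerEquivRange
    let g₀ : LinearMap.range T →ₗ[ℂ] ℂ := ψ ∘ₗ (e.symm : LinearMap.range T →ₗ[ℂ] _)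
    have hg₀ : ∀ p : ℂ × ℂ, g₀ ⟨T p, LinearMap.mem_range_self T p⟩ = p.1 + p.2 * w := by
      intro p
      have h1 : (⟨T p, LinearMap.mem_range_self T p⟩ : LinearMap.range T)
          = e (Submodule.Quotient.mk p) := by
        refine (Subtype.ext ?_).symm
        exact LinearMap.quotKerEquivRange_apply_mk T p
      simp only [g₀, LinearMap.comp_apply, LinearEquiv.coe_coe, h1,
        LinearEquiv.symm_apply_apply, ψ, Submodule.liftQ_apply]
      rfl
    have hbound : ∀ x : LinearMap.range T, ‖g₀ x‖ ≤ 1 * ‖(x : A)‖ := by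
      rintro ⟨x, p, rfl⟩
      rw [one_mul, hg₀ p]
      exact key p
    let f₀ : LinearMap.range T →L[ℂ] ℂ := g₀.mkContinuous 1 hbound
    obtain ⟨g, hg_ext, hg_norm⟩ := exists_extension_norm_eq (LinearMap.range T) f₀
    have h1mem : (1 : A) ∈ LinearMap.range T := ⟨(1, 0), by simp [T]⟩
    have hamem : a ∈ LinearMap.range T := ⟨(0, 1), by simp [T]⟩
    have hT1 : T (1, 0) = (1 : A) := by simp [T]
    have hTa : T (0, 1) = a := by simp [T]
    have hg1 : g 1 = 1 := by
      have := hg_ext ⟨(1 : A), h1mem⟩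
      rw [this]
      have : f₀ ⟨(1:A), h1mem⟩ = g₀ ⟨(1:A), h1mem⟩ := rfl
      rw [this]
      have h2 : (⟨(1:A), h1mem⟩ : LinearMap.range T)
          = ⟨T (1, 0), LinearMap.mem_range_self T (1, 0)⟩ := by
        exact Subtype.ext hT1.symm
      rw [h2, hg₀]; simp
    have hga : g a = w := by
      have := hg_ext ⟨a, hamem⟩
      rw [this]
      have : f₀ ⟨a, hamem⟩ = g₀ ⟨a, hamem⟩ := rfl
      rw [this]
      have h2 : (⟨a, hamem⟩ : LinearMap.range T)
          = ⟨T (0, 1), LinearMap.mem_range_self T (0, 1)⟩ := by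
        exact Subtype.ext hTa.symm
      rw [h2, hg₀]; simp
    have hf₀le : ‖f₀‖ ≤ 1 := LinearMap.mkContinuous_norm_le g₀ zero_le_one hbound
    have hgnorm : ‖g‖ = 1 := by
      apply le_antisymm (hg_norm ▸ hf₀le)
      have := g.le_opNorm (1 : A)
      rw [hg1, norm_one, norm_one, mul_one] at this
      exact this
    exact ⟨g, hgnorm, hg1, hga⟩
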